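/- Let 𝒫 ⊂ ℝ^m be a lattice polytope of dimension d ≥ 2 such that the relative interior of 𝒫 contains a lattice point. Then rdeg y ≤ d − 1 for all y ∈ M*(𝒫). -/

import Mathlib

open Set

noncomputable section

/-- Lift a point of `ℝ^m` to height 1 in `ℝ^(m+1)`. -/
def lift {m : ℕ} (x : Fin m → ℝ) : Fin (m + 1) → ℝ := Fin.snoc x 1

/-- A point with integer coordinates (a lattice point). -/
def isLat {n : ℕ} (x : Fin n → ℝ) : Prop := ∀ i, ∃ z : ℤ, x i = (z : ℝ)

/-- The cone `C(P)` generated by `P × {1}` (for convex `P`). -/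
def coneOf {m : ℕ} (P : Set (Fin m → ℝ)) : Set (Fin (m + 1) → ℝ) :=
  {y | ∃ (c : ℝ) (p : Fin m → ℝ), 0 ≤ c ∧ p ∈ P ∧ y = c • lift p}

/-- The semigroup `M(P)` generated by the lattice points of `P × {1}`. -/
def Msemi {m : ℕ} (P : Set (Fin m → ℝ)) : AddSubmonoid (Fin (m + 1) → ℝ) :=
  AddSubmonoid.closure {y | ∃ p ∈ P, isLat p ∧ y = lift p}

/-- `M*(P)`: the lattice points in the relative interior of `C(P)`. -/
def Mstar {m : ℕ} (P : Set (Fin m → ℝ)) : Set (Fin (m + 1) → ℝ) :=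
  {y | y ∈ intrinsicInterior ℝ (coneOf P) ∧ isLat y}

/-- The degree: the last coordinate. -/
def deg {m : ℕ} (y : Fin (m + 1) → ℝ) : ℝ := y (Fin.last m)

/-- The reduced `P`-degree of `y`. -/
def rdeg {m : ℕ} (P : Set (Fin m → ℝ)) (y : Fin (m + 1) → ℝ) : ℝ :=
  sInf {r | ∃ z w, z ∈ Mstar P ∧ w ∈ Msemi P ∧ y = z + w ∧ r = deg z}

/-- An empty lattice simplex: its only lattice points are its vertices. -/
def IsEmptyLatticeSimplex {m : ℕ} (s : Set (Fin m → ℝ)) : Prop :=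
  ∃ (k : ℕ) (x : Fin (k + 1) → (Fin m → ℝ)), AffineIndependent ℝ x ∧
    (∀ i, isLat (x i)) ∧ s = convexHull ℝ (Set.range x) ∧
    (∀ p ∈ s, isLat p → p ∈ Set.range x)

structure IsLatticeTriangulation {m : ℕ} (P : Set (Fin m → ℝ))
    (T : Set (Set (Fin m → ℝ))) : Prop where
  finite : T.Finite
  simplex : ∀ s ∈ T, IsEmptyLatticeSimplex s
  subset : ∀ s ∈ T, s ⊆ P
  partition : ∀ p ∈ P, ∃! s, s ∈ T ∧ p ∈ intrinsicInterior ℝ s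
  vertex : ∀ p ∈ P, isLat p → {p} ∈ T

namespace Stmt7Aux

variable {m : ℕ}

/-- projection dropping the last coordinate -/
def pr {m : ℕ} (x : Fin (m + 1) → ℝ) : Fin m → ℝ := fun i => x i.castSucc

@[simp] lemma lift_last (x : Fin m → ℝ) : lift x (Fin.last m) = 1 := by
  simp [lift]

@[simp] lemma lift_castSucc (x : Fin m → ℝ) (i : Fin m) : lift x i.castSucc = x i := by
  simp [lift]

@[simp] lemma deg_lift (x : Fin m → ℝ) : deg (lift x) = 1 := by simp [deg]

@[simp] lemma pr_lift (x : Fin m → ℝ) : pr (lift x) = x := by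
  funext i; simp [pr]

@[simp] lemma deg_add (x y : Fin (m+1) → ℝ) : deg (x + y) = deg x + deg y := rfl
@[simp] lemma deg_sub (x y : Fin (m+1) → ℝ) : deg (x - y) = deg x - deg y := rfl
@[simp] lemma deg_smul (a : ℝ) (x : Fin (m+1) → ℝ) : deg (a • x) = a * deg x := rfl
@[simp] lemma deg_zero : deg (0 : Fin (m+1) → ℝ) = 0 := rfl
@[simp] lemma deg_neg (x : Fin (m+1) → ℝ) : deg (-x) = - deg x := rfl

lemma deg_sum {ι : Type*} (s : Finset ι) (f : ι → Fin (m+1) → ℝ) :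
    deg (∑ i ∈ s, f i) = ∑ i ∈ s, deg (f i) := by
  simp [deg, Finset.sum_apply]

@[simp] lemma pr_add (x y : Fin (m+1) → ℝ) : pr (x + y) = pr x + pr y := rfl
@[simp] lemma pr_sub (x y : Fin (m+1) → ℝ) : pr (x - y) = pr x - pr y := rfl
@[simp] lemma pr_smul (a : ℝ) (x : Fin (m+1) → ℝ) : pr (a • x) = a • pr x := rfl

lemma pr_sum {ι : Type*} (s : Finset ι) (f : ι → Fin (m+1) → ℝ) :
    pr (∑ i ∈ s, f i) = ∑ i ∈ s, pr (f i) := by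
  funext j; simp [pr, Finset.sum_apply]

lemma eq_lift_pr {x : Fin (m+1) → ℝ} (h : deg x = 1) : x = lift (pr x) := by
  funext i
  refine Fin.lastCases ?_ ?_ i
  · simpa [deg] using h
  · intro j; simp [pr]

lemma norm_pr_le (x : Fin (m+1) → ℝ) : ‖pr x‖ ≤ ‖x‖ := by
  rcases m with - | m'
  · have h0 : pr x = 0 := Subsingleton.elim _ _
    rw [h0, norm_zero]; exact norm_nonneg x
  · apply pi_norm_le_iff_of_nonneg (norm_nonneg x) |>.2
    intro i
    exact norm_le_pi_norm x i.castSucc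

lemma abs_deg_le (x : Fin (m+1) → ℝ) : |deg x| ≤ ‖x‖ := by
  simpa [deg] using norm_le_pi_norm x (Fin.last m)

/-! ### lattice point lemmas -/

lemma isLat_add {n : ℕ} {x y : Fin n → ℝ} (hx : isLat x) (hy : isLat y) : isLat (x + y) := by
  intro i; obtain ⟨a, ha⟩ := hx i; obtain ⟨b, hb⟩ := hy i
  exact ⟨a + b, by simp [ha, hb]⟩

lemma isLat_sub {n : ℕ} {x y : Fin n → ℝ} (hx : isLat x) (hy : isLat y) : isLat (x - y) := by
  intro i; obtain ⟨a, ha⟩ := hx i; obtain ⟨b, hb⟩ := hy i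
  exact ⟨a - b, by simp [ha, hb]⟩

lemma isLat_lift {x : Fin m → ℝ} (hx : isLat x) : isLat (lift x) := by
  intro i
  refine Fin.lastCases ?_ ?_ i
  · exact ⟨1, by simp⟩
  · intro j; simpa using hx j

lemma isLat_pr {x : Fin (m+1) → ℝ} (hx : isLat x) : isLat (pr x) :=
  fun i => hx i.castSucc

lemma isLat_sum {ι : Type*} (s : Finset ι) (f : ι → Fin m → ℝ) (h : ∀ i ∈ s, isLat (f i)) :
    isLat (∑ i ∈ s, f i) := by
  classical
  induction s using Finset.induction with
  | empty => intro i; exact ⟨0, by simp⟩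
  | @insert a s' hx ih =>
      rw [Finset.sum_insert hx]
      exact isLat_add (h a (Finset.mem_insert_self a s'))
        (ih fun i hi => h i (Finset.mem_insert_of_mem hi))

lemma isLat_deg_int {x : Fin (m+1) → ℝ} (hx : isLat x) : ∃ z : ℤ, deg x = (z : ℝ) :=
  hx (Fin.last m)

/-! ### cone lemmas -/

lemma mem_coneOf {P : Set (Fin m → ℝ)} {c : ℝ} {p : Fin m → ℝ} (hc : 0 ≤ c) (hp : p ∈ P) :
    c • lift p ∈ coneOf P := ⟨c, p, hc, hp, rfl⟩

lemma lift_mem_coneOf {P : Set (Fin m → ℝ)} {p : Fin m → ℝ} (hp : p ∈ P) :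
    lift p ∈ coneOf P := by
  simpa using mem_coneOf zero_le_one hp

lemma coneOf_zero_mem {P : Set (Fin m → ℝ)} (hP : P.Nonempty) : (0 : Fin (m+1) → ℝ) ∈ coneOf P := by
  obtain ⟨p, hp⟩ := hP
  exact ⟨0, p, le_refl 0, hp, by simp⟩

lemma coneOf_smul {P : Set (Fin m → ℝ)} {a : ℝ} (ha : 0 ≤ a) {x : Fin (m+1) → ℝ}
    (hx : x ∈ coneOf P) : a • x ∈ coneOf P := by
  obtain ⟨c, p, hc, hp, rfl⟩ := hx
  exact ⟨a * c, p, mul_nonneg ha hc, hp, by rw [smul_smul]⟩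

lemma coneOf_add {P : Set (Fin m → ℝ)} (hconv : Convex ℝ P) {x y : Fin (m+1) → ℝ}
    (hx : x ∈ coneOf P) (hy : y ∈ coneOf P) : x + y ∈ coneOf P := by
  obtain ⟨c, p, hc, hp, rfl⟩ := hx
  obtain ⟨e, r, he, hr, rfl⟩ := hy
  rcases eq_or_lt_of_le (add_nonneg hc he : (0:ℝ) ≤ c + e) with h0 | hpos
  · have hc0 : c = 0 := by linarith [(le_antisymm (by linarith) hc : c = 0)]
    have he0 : e = 0 := by linarith
    subst hc0; subst he0
    simpa using coneOf_zero_mem ⟨p, hp⟩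
  · refine ⟨c + e, (c/(c+e)) • p + (e/(c+e)) • r, le_of_lt hpos,
      hconv hp hr (by positivity) (by positivity) (by field_simp), ?_⟩
    have h1 : lift ((c/(c+e)) • p + (e/(c+e)) • r)
        = (c/(c+e)) • lift p + (e/(c+e)) • lift r := by
      have hdeg : deg ((c/(c+e)) • lift p + (e/(c+e)) • lift r) = 1 := by
        simp only [deg_add, deg_smul, deg_lift]
        field_simp
      rw [eq_lift_pr hdeg]
      congr 1
      simp [pr_add, pr_smul]
    rw [h1, smul_add, smul_smul, smul_smul]
    congr 2 <;> field_simp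

lemma coneOf_deg_nonneg {P : Set (Fin m → ℝ)} {x : Fin (m+1) → ℝ} (hx : x ∈ coneOf P) :
    0 ≤ deg x := by
  obtain ⟨c, p, hc, hp, rfl⟩ := hx
  simpa using hc

lemma coneOf_sum_mem {P : Set (Fin m → ℝ)} (hconv : Convex ℝ P) (hne : P.Nonempty)
    {ι : Type*} (s : Finset ι) (w : ι → ℝ) (b : ι → Fin m → ℝ)
    (hw : ∀ i ∈ s, 0 ≤ w i) (hb : ∀ i ∈ s, b i ∈ P) :
    (∑ i ∈ s, w i • lift (b i)) ∈ coneOf P := by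
  classical
  induction s using Finset.induction with
  | empty => simpa using coneOf_zero_mem hne
  | @insert a s' hx ih =>
      rw [Finset.sum_insert hx]
      exact coneOf_add hconv
        (coneOf_smul (hw a (Finset.mem_insert_self a s')) (lift_mem_coneOf (hb a (Finset.mem_insert_self a s'))))
        (ih (fun i hi => hw i (Finset.mem_insert_of_mem hi)) (fun i hi => hb i (Finset.mem_insert_of_mem hi)))


/-! ### affine span and relative interior machinery -/

/-- The linear span of the cone. -/
def KC (P : Set (Fin m → ℝ)) : Submodule ℝ (Fin (m+1) → ℝ) := Submodule.span ℝ (coneOf P)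

lemma coneOf_subset_KC (P : Set (Fin m → ℝ)) : coneOf P ⊆ KC P := Submodule.subset_span

lemma affineSpan_coneOf_eq (P : Set (Fin m → ℝ)) (hne : P.Nonempty) :
    (affineSpan ℝ (coneOf P) : Set (Fin (m+1) → ℝ)) = (KC P : Set (Fin (m+1) → ℝ)) := by
  apply subset_antisymm
  · have h1 : affineSpan ℝ (coneOf P) ≤ (KC P).toAffineSubspace := by
      rw [affineSpan_le]
      exact coneOf_subset_KC P
    intro x hx
    exact h1 hx
  · intro x hx
    show x ∈ affineSpan ℝ (coneOf P)
    rw [SetLike.mem_coe, KC, Submodule.mem_span_set'] at hx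
    obtain ⟨n, f, g, hsum⟩ := hx
    classical
    set pts : Fin (n+1) → (Fin (m+1) → ℝ) := Fin.cons 0 (fun i => (g i : Fin (m+1) → ℝ)) with hpts
    set w : Fin (n+1) → ℝ := Fin.cons (1 - ∑ i, f i) f with hw
    have hwsum : ∑ i, w i = 1 := by
      rw [hw, Fin.sum_univ_succ]
      simp
    have hcomb : (Finset.univ.affineCombination ℝ pts) w = x := by
      rw [Finset.affineCombination_eq_linear_combination _ _ _ hwsum]
      rw [Fin.sum_univ_succ, hpts, hw]
      simpa using hsum
    have hmem : (Finset.univ.affineCombination ℝ pts) w ∈ affineSpan ℝ (Set.range pts) :=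
      affineCombination_mem_affineSpan hwsum pts
    rw [hcomb] at hmem
    have hr : Set.range pts ⊆ coneOf P := by
      rintro y ⟨i, rfl⟩
      refine Fin.cases ?_ ?_ i
      · simpa [hpts] using coneOf_zero_mem hne
      · intro j; simpa [hpts] using (g j).2
    exact affineSpan_mono ℝ hr hmem

lemma mem_intrinsicInterior_iff' {k : ℕ} {s : Set (Fin k → ℝ)} {x : Fin k → ℝ} :
    x ∈ intrinsicInterior ℝ s ↔ x ∈ affineSpan ℝ s ∧
      ∃ ε > 0, ∀ u ∈ (affineSpan ℝ s : Set (Fin k → ℝ)), dist u x < ε → u ∈ s := by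
  rw [mem_intrinsicInterior]
  constructor
  · rintro ⟨y, hy, rfl⟩
    refine ⟨y.2, ?_⟩
    rw [mem_interior_iff_mem_nhds, Metric.mem_nhds_iff] at hy
    obtain ⟨ε, hε, hball⟩ := hy
    refine ⟨ε, hε, fun u hu hdist => ?_⟩
    have : (⟨u, hu⟩ : affineSpan ℝ s) ∈ Metric.ball y ε := by
      simpa [Metric.mem_ball, Subtype.dist_eq] using hdist
    exact hball this
  · rintro ⟨hx, ε, hε, h⟩
    refine ⟨⟨x, hx⟩, ?_, rfl⟩
    rw [mem_interior_iff_mem_nhds, Metric.mem_nhds_iff]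
    refine ⟨ε, hε, ?_⟩
    rintro ⟨u, hu⟩ hb
    exact h u hu (by simpa [Metric.mem_ball, Subtype.dist_eq] using hb)

lemma mem_riC_iff {P : Set (Fin m → ℝ)} (hne : P.Nonempty) {x : Fin (m+1) → ℝ} :
    x ∈ intrinsicInterior ℝ (coneOf P) ↔ x ∈ KC P ∧
      ∃ ε > 0, ∀ u ∈ KC P, ‖u - x‖ < ε → u ∈ coneOf P := by
  rw [mem_intrinsicInterior_iff']
  have hset := affineSpan_coneOf_eq P hne
  constructor
  · rintro ⟨hx, ε, hε, h⟩
    have hx' : x ∈ (affineSpan ℝ (coneOf P) : Set (Fin (m+1) → ℝ)) := hx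
    rw [hset] at hx'
    refine ⟨hx', ε, hε, fun u hu hd => h u ?_ (by rwa [dist_eq_norm])⟩
    have : u ∈ (KC P : Set (Fin (m+1) → ℝ)) := hu
    rwa [← hset] at this
  · rintro ⟨hx, ε, hε, h⟩
    have hx' : x ∈ (affineSpan ℝ (coneOf P) : Set (Fin (m+1) → ℝ)) := by
      rw [hset]; exact hx
    refine ⟨hx', ε, hε, fun u hu hd => ?_⟩
    rw [hset] at hu
    exact h u hu (by rwa [← dist_eq_norm])

lemma riC_add {P : Set (Fin m → ℝ)} (hconv : Convex ℝ P) (hne : P.Nonempty)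
    {x c : Fin (m+1) → ℝ} (hx : x ∈ intrinsicInterior ℝ (coneOf P)) (hc : c ∈ coneOf P) :
    x + c ∈ intrinsicInterior ℝ (coneOf P) := by
  rw [mem_riC_iff hne] at hx ⊢
  obtain ⟨hxK, ε, hε, h⟩ := hx
  refine ⟨(KC P).add_mem hxK (coneOf_subset_KC P hc), ε, hε, fun u hu hd => ?_⟩
  have h1 : u - c ∈ coneOf P := by
    refine h (u - c) ((KC P).sub_mem hu (coneOf_subset_KC P hc)) ?_
    have : u - c - x = u - (x + c) := by ring_nf
    rw [this]; exact hd
  have := coneOf_add hconv h1 hc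
  simpa using this

lemma riC_smul {P : Set (Fin m → ℝ)} (hne : P.Nonempty) {x : Fin (m+1) → ℝ} {a : ℝ}
    (ha : 0 < a) (hx : x ∈ intrinsicInterior ℝ (coneOf P)) :
    a • x ∈ intrinsicInterior ℝ (coneOf P) := by
  rw [mem_riC_iff hne] at hx ⊢
  obtain ⟨hxK, ε, hε, h⟩ := hx
  refine ⟨(KC P).smul_mem a hxK, a * ε, by positivity, fun u hu hd => ?_⟩
  have h1 : a⁻¹ • u ∈ coneOf P := by
    refine h _ ((KC P).smul_mem a⁻¹ hu) ?_
    have : a⁻¹ • u - x = a⁻¹ • (u - a • x) := by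
      rw [smul_sub, smul_smul, inv_mul_cancel₀ (ne_of_gt ha), one_smul]
    rw [this, norm_smul, norm_inv, Real.norm_eq_abs, abs_of_pos ha]
    calc a⁻¹ * ‖u - a • x‖ < a⁻¹ * (a * ε) :=
      mul_lt_mul_of_pos_left hd (inv_pos.2 ha)
    _ = ε := by field_simp
  have := coneOf_smul (le_of_lt ha) h1
  rwa [smul_smul, mul_inv_cancel₀ (ne_of_gt ha), one_smul] at this

lemma riC_deg_pos {P : Set (Fin m → ℝ)} {q : Fin m → ℝ} (hq : q ∈ P)
    {x : Fin (m+1) → ℝ} (hx : x ∈ intrinsicInterior ℝ (coneOf P)) : 0 < deg x := by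
  have hne : P.Nonempty := ⟨q, hq⟩
  rw [mem_riC_iff hne] at hx
  obtain ⟨hxK, ε, hε, h⟩ := hx
  have hqK : lift q ∈ KC P := coneOf_subset_KC P (lift_mem_coneOf hq)
  have hnq : (0:ℝ) < ‖lift q‖ := by
    have : (1:ℝ) ≤ ‖lift q‖ := by simpa using abs_deg_le (lift q)
    linarith
  set δ := ε / (2 * ‖lift q‖) with hδ
  have hδpos : 0 < δ := by positivity
  have hu : x - δ • lift q ∈ coneOf P := by
    refine h _ ((KC P).sub_mem hxK ((KC P).smul_mem δ hqK)) ?_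
    have h0 : x - δ • lift q - x = -(δ • lift q) := by ring_nf
    rw [h0, norm_neg, norm_smul, Real.norm_eq_abs, abs_of_pos hδpos, hδ]
    have h2 : ε / (2 * ‖lift q‖) * ‖lift q‖ = ε / 2 := by
      field_simp
    rw [h2]
    linarith
  have := coneOf_deg_nonneg hu
  simp only [deg_sub, deg_smul, deg_lift, mul_one] at this
  linarith

lemma mem_ri_comb {k : ℕ} {s : Set (Fin k → ℝ)} (hconv : Convex ℝ s) {q r : Fin k → ℝ}
    (hq : q ∈ intrinsicInterior ℝ s) (hr : r ∈ s) {θ : ℝ} (h0 : 0 ≤ θ) (h1 : θ < 1) :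
    (1-θ) • q + θ • r ∈ intrinsicInterior ℝ s := by
  have h1θ : (0:ℝ) < 1 - θ := by linarith
  have hne0 : (1:ℝ) - θ ≠ 0 := ne_of_gt h1θ
  rw [mem_intrinsicInterior_iff'] at hq ⊢
  obtain ⟨hqa, ε, hε, h⟩ := hq
  have hra : r ∈ affineSpan ℝ s := subset_affineSpan ℝ s hr
  have hxa : (1-θ) • q + θ • r ∈ affineSpan ℝ s := by
    have hid : (1-θ) • q + θ • r = θ • (r -ᵥ q) +ᵥ q := by
      simp only [vsub_eq_sub, vadd_eq_add]
      module
    rw [hid]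
    exact AffineSubspace.smul_vsub_vadd_mem _ θ hra hqa hqa
  refine ⟨hxa, (1-θ) * ε, by positivity, fun u hu hd => ?_⟩
  set x := (1-θ) • q + θ • r with hx
  set q' := q + (1/(1-θ)) • (u - x) with hq'
  have hq'a : q' ∈ affineSpan ℝ s := by
    have hid : q' = (1/(1-θ)) • (u -ᵥ x) +ᵥ q := by
      rw [hq']
      simp only [vsub_eq_sub, vadd_eq_add]
      module
    rw [hid]
    exact AffineSubspace.smul_vsub_vadd_mem _ _ hu hxa hqa
  have hq's : q' ∈ s := by
    refine h q' hq'a ?_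
    have heq : q' - q = (1/(1-θ)) • (u - x) := by rw [hq']; module
    rw [dist_eq_norm, heq, norm_smul, Real.norm_eq_abs,
      abs_of_pos (div_pos one_pos h1θ)]
    rw [dist_eq_norm] at hd
    rw [div_mul_eq_mul_div, one_mul, div_lt_iff₀ h1θ]
    calc ‖u - x‖ < (1-θ) * ε := hd
    _ = ε * (1-θ) := by ring
  have key : (1-θ) • q' = (1-θ) • q + (u - x) := by
    rw [hq', smul_add, smul_smul, mul_one_div, div_self hne0, one_smul]
  have hu' : u = (1-θ) • q' + θ • r := by
    rw [key, hx]
    module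
  rw [hu']
  exact hconv hq's hr (le_of_lt h1θ) h0 (by ring)

lemma span_lift_eq (P : Set (Fin m → ℝ)) :
    Submodule.span ℝ (lift '' P) = KC P := by
  apply le_antisymm
  · apply Submodule.span_le.2
    rintro y ⟨p, hp, rfl⟩
    exact coneOf_subset_KC P (lift_mem_coneOf hp)
  · apply Submodule.span_le.2
    rintro y ⟨c, p, hc, hp, rfl⟩
    exact Submodule.smul_mem _ c (Submodule.subset_span ⟨p, hp, rfl⟩)

lemma slice_mem_affineSpan {P : Set (Fin m → ℝ)} {x : Fin (m+1) → ℝ}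
    (hx : x ∈ KC P) (hdeg : deg x = 1) : pr x ∈ affineSpan ℝ P := by
  rw [← span_lift_eq P, Submodule.mem_span_set'] at hx
  obtain ⟨n, f, g, hsum⟩ := hx
  have hpts : ∀ i, ∃ p, p ∈ P ∧ lift p = (g i : Fin (m+1) → ℝ) := by
    intro i
    obtain ⟨p, hp, hlp⟩ := (g i).2
    exact ⟨p, hp, hlp⟩
  choose p hp hlp using hpts
  have hx1 : x = ∑ i, f i • lift (p i) := by
    rw [← hsum]
    congr 1
    funext i
    rw [hlp i]
  have hfsum : ∑ i, f i = 1 := by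
    have := congrArg deg hx1
    rw [deg_sum] at this
    simp only [deg_smul, deg_lift, mul_one] at this
    rw [hdeg] at this
    exact this.symm
  have hprx : pr x = ∑ i, f i • p i := by
    rw [hx1, pr_sum]
    congr 1
    funext i
    rw [pr_smul, pr_lift]
  rw [hprx]
  have hmem : (Finset.univ.affineCombination ℝ p) f ∈ affineSpan ℝ (Set.range p) :=
    affineCombination_mem_affineSpan hfsum p
  rw [Finset.affineCombination_eq_linear_combination _ _ _ hfsum] at hmem
  exact affineSpan_mono ℝ (Set.range_subset_iff.2 hp) hmem

lemma lift_mem_riC {P : Set (Fin m → ℝ)} {q : Fin m → ℝ}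
    (hq : q ∈ intrinsicInterior ℝ P) :
    lift q ∈ intrinsicInterior ℝ (coneOf P) := by
  have hqP : q ∈ P := intrinsicInterior_subset hq
  have hne : P.Nonempty := ⟨q, hqP⟩
  rw [mem_intrinsicInterior_iff'] at hq
  obtain ⟨hqa, ε, hε, h⟩ := hq
  rw [mem_riC_iff hne]
  have hqK : lift q ∈ KC P := coneOf_subset_KC P (lift_mem_coneOf hqP)
  have hnormq : (0:ℝ) < 1 + ‖lift q‖ := by positivity
  refine ⟨hqK, min (1/2) (ε / (2 * (1 + ‖lift q‖))), by positivity, fun u hu hd => ?_⟩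
  set s := deg u with hs
  have hs1 : |s - 1| < 1/2 := by
    calc |s - 1| = |deg (u - lift q)| := by simp [hs]
    _ ≤ ‖u - lift q‖ := abs_deg_le _
    _ < 1/2 := lt_of_lt_of_le hd (min_le_left _ _)
  have hspos : 0 < s := by
    rcases abs_lt.1 hs1 with ⟨h1, h2⟩
    linarith
  set v := s⁻¹ • u with hv
  have hvK : v ∈ KC P := (KC P).smul_mem _ hu
  have hvdeg : deg v = 1 := by
    rw [hv, deg_smul, ← hs, inv_mul_cancel₀ (ne_of_gt hspos)]
  have hva : pr v ∈ affineSpan ℝ P := slice_mem_affineSpan hvK hvdeg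
  have hbound : ‖pr v - q‖ < ε := by
    have heq : pr v - q = s⁻¹ • pr ((u - lift q) - (s - 1) • lift q) := by
      rw [hv]
      simp only [pr_sub, pr_smul, pr_lift]
      rw [smul_sub, smul_sub, smul_smul]
      have : s⁻¹ * (s - 1) = 1 - s⁻¹ := by
        rw [mul_sub, inv_mul_cancel₀ (ne_of_gt hspos), mul_one]
      rw [this]
      ring_nf
      module
    rw [heq, norm_smul, Real.norm_eq_abs, abs_of_pos (inv_pos.2 hspos)]
    have hb1 : ‖pr ((u - lift q) - (s - 1) • lift q)‖ ≤ ‖u - lift q‖ + |s-1| * ‖lift q‖ := by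
      calc ‖pr ((u - lift q) - (s - 1) • lift q)‖ ≤ ‖(u - lift q) - (s - 1) • lift q‖ :=
        norm_pr_le _
      _ ≤ ‖u - lift q‖ + ‖(s-1) • lift q‖ := norm_sub_le _ _
      _ = ‖u - lift q‖ + |s-1| * ‖lift q‖ := by rw [norm_smul, Real.norm_eq_abs]
    have hd2 : ‖u - lift q‖ < ε / (2 * (1 + ‖lift q‖)) := lt_of_lt_of_le hd (min_le_right _ _)
    have habs : |s - 1| ≤ ‖u - lift q‖ := by
      calc |s - 1| = |deg (u - lift q)| := by simp [hs]
      _ ≤ ‖u - lift q‖ := abs_deg_le _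
    have hsinv : s⁻¹ ≤ 2 := by
      rcases abs_lt.1 hs1 with ⟨h1, h2⟩
      rw [inv_le_comm₀ hspos (by norm_num : (0:ℝ) < 2)]
      linarith
    have hnn : (0:ℝ) ≤ ‖u - lift q‖ := norm_nonneg _
    calc s⁻¹ * ‖pr ((u - lift q) - (s - 1) • lift q)‖
        ≤ 2 * (‖u - lift q‖ + |s-1| * ‖lift q‖) := by
          apply mul_le_mul hsinv hb1 (norm_nonneg _) (by norm_num)
    _ ≤ 2 * (‖u - lift q‖ * (1 + ‖lift q‖)) := by
          nlinarith [abs_nonneg (s-1), norm_nonneg (lift q)]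
    _ < 2 * ((ε / (2 * (1 + ‖lift q‖))) * (1 + ‖lift q‖)) := by
          apply mul_lt_mul_of_pos_left _ (by norm_num : (0:ℝ) < 2)
          exact mul_lt_mul_of_pos_right hd2 hnormq
    _ = ε := by field_simp
  have hvP : pr v ∈ P := h (pr v) hva (by rwa [dist_eq_norm])
  have : u = s • lift (pr v) := by
    rw [← eq_lift_pr hvdeg, hv, smul_smul, mul_inv_cancel₀ (ne_of_gt hspos), one_smul]
  rw [this]
  exact mem_coneOf (le_of_lt hspos) hvP


/-! ### lattice points in a bounded set are finite -/

lemma lat_finite {k : ℕ} {s : Set (Fin k → ℝ)} (hb : Bornology.IsBounded s) :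
    {x ∈ s | isLat x}.Finite := by
  obtain ⟨R, hR⟩ := isBounded_iff_forall_norm_le.1 hb
  classical
  set F : (Fin k → ℤ) → (Fin k → ℝ) := fun g i => (g i : ℝ) with hF
  have hsub : {x ∈ s | isLat x} ⊆ F '' (Set.univ.pi fun _ => Set.Icc (-⌈R⌉) ⌈R⌉) := by
    rintro x ⟨hxs, hxl⟩
    choose g hg using hxl
    refine ⟨g, ?_, ?_⟩
    · intro i _
      have hxi : |x i| ≤ R := le_trans (norm_le_pi_norm x i) (hR x hxs)
      rw [hg i] at hxi
      have h1 : ((g i : ℝ)) ≤ (⌈R⌉ : ℝ) := le_trans (le_trans (le_abs_self _) hxi) (Int.le_ceil R)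
      have h2 : ((-⌈R⌉ : ℤ) : ℝ) ≤ (g i : ℝ) := by
        push_cast
        have := neg_abs_le ((g i : ℝ))
        have h3 : -(⌈R⌉:ℝ) ≤ -|((g i : ℝ))| := by
          apply neg_le_neg
          exact le_trans hxi (Int.le_ceil R)
        linarith [neg_abs_le ((g i : ℝ))]
      constructor
      · exact_mod_cast h2
      · exact_mod_cast h1
    · funext i
      exact (hg i).symm
  exact Set.Finite.subset (Set.Finite.image F (Set.Finite.pi fun _ => Set.finite_Icc _ _)) hsub

/-! ### hull machinery -/

/-- Convex hull of `q` and the `b i`, described by explicit lifted convex combinations. -/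
def hul {n : ℕ} (q : Fin m → ℝ) (b : Fin n → Fin m → ℝ) : Set (Fin m → ℝ) :=
  {x | ∃ μ : Fin (n+1) → ℝ, (∀ l, 0 ≤ μ l) ∧ (∑ l, μ l) = 1 ∧
    lift x = μ 0 • lift q + ∑ i, μ i.succ • lift (b i)}

lemma q_mem_hul {n : ℕ} (q : Fin m → ℝ) (b : Fin n → Fin m → ℝ) : q ∈ hul q b := by
  classical
  refine ⟨fun l => if l = 0 then 1 else 0, fun l => by positivity, ?_, ?_⟩
  · rw [Fin.sum_univ_succ]
    simp [Fin.succ_ne_zero]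
  · simp [Fin.succ_ne_zero]

lemma b_mem_hul {n : ℕ} (q : Fin m → ℝ) (b : Fin n → Fin m → ℝ) (i : Fin n) :
    b i ∈ hul q b := by
  classical
  refine ⟨fun l => if l = i.succ then 1 else 0, fun l => by positivity, ?_, ?_⟩
  · simp [Finset.sum_ite_eq']
  · have h0 : ((0 : Fin (n+1)) = i.succ) = False := by
      simp [(Fin.succ_ne_zero i).symm]
    simp only [h0, if_false, zero_smul, zero_add, Fin.succ_inj, ite_smul, one_smul]
    rw [Finset.sum_ite_eq' Finset.univ i (fun j => lift (b j))]
    simp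

lemma hul_proj {n : ℕ} {q : Fin m → ℝ} {b : Fin n → Fin m → ℝ} {x : Fin m → ℝ}
    {μ : Fin (n+1) → ℝ}
    (hrep : lift x = μ 0 • lift q + ∑ i, μ i.succ • lift (b i)) :
    x = ∑ l, μ l • (Fin.cons q b : Fin (n+1) → Fin m → ℝ) l := by
  have h := congrArg pr hrep
  rw [pr_lift, pr_add, pr_smul, pr_lift, pr_sum] at h
  simp only [pr_smul, pr_lift] at h
  rw [h, Fin.sum_univ_succ]
  simp

lemma hul_subset {n : ℕ} {S : Set (Fin m → ℝ)} (hS : Convex ℝ S)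
    {q : Fin m → ℝ} {b : Fin n → Fin m → ℝ} (hq : q ∈ S) (hb : ∀ i, b i ∈ S) :
    hul q b ⊆ S := by
  rintro x ⟨μ, hμ0, hμ1, hrep⟩
  rw [hul_proj hrep]
  refine Convex.sum_mem hS (fun l _ => hμ0 l) hμ1 ?_
  intro l _
  refine Fin.cases ?_ ?_ l
  · simpa using hq
  · intro j; simpa using hb j

lemma hul_convex {n : ℕ} (q : Fin m → ℝ) (b : Fin n → Fin m → ℝ) :
    Convex ℝ (hul q b) := by
  rintro x ⟨μ, hμ0, hμ1, hμrep⟩ y ⟨ν, hν0, hν1, hνrep⟩ a c ha hc hac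
  refine ⟨fun l => a * μ l + c * ν l,
    fun l => add_nonneg (mul_nonneg ha (hμ0 l)) (mul_nonneg hc (hν0 l)), ?_, ?_⟩
  · simp only [Finset.sum_add_distrib, ← Finset.mul_sum, hμ1, hν1, mul_one]
    exact hac
  · have hlift : lift (a • x + c • y) = a • lift x + c • lift y := by
      have hdeg : deg (a • lift x + c • lift y) = 1 := by
        simp only [deg_add, deg_smul, deg_lift, mul_one]
        exact hac
      rw [eq_lift_pr hdeg]
      congr 1
      simp [pr_add, pr_smul]
    rw [hlift, hμrep, hνrep]
    simp only [smul_add, smul_smul, Finset.smul_sum]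
    simp only [add_smul, Finset.sum_add_distrib]
    abel

/-! ### linear independence lemmas -/


lemma linIndep_lift {n : ℕ} {b : Fin n → Fin m → ℝ} (h : AffineIndependent ℝ b) :
    LinearIndependent ℝ (fun i => lift (b i)) := by
  rw [Fintype.linearIndependent_iff]
  intro g hg
  have hdeg : ∑ i, g i = 0 := by
    have := congrArg deg hg
    rw [deg_sum] at this
    simpa using this
  have hsum0 : ∑ i, g i • b i = 0 := by
    have := congrArg pr hg
    rw [pr_sum] at this
    simp only [pr_smul, pr_lift] at this
    exact this
  intro i
  exact affineIndependent_iff.1 h Finset.univ g hdeg hsum0 i (Finset.mem_univ i)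

lemma linIndep_exchange {N : ℕ} {v : Fin N → Fin (m+1) → ℝ} (hli : LinearIndependent ℝ v)
    (γ : Fin N → ℝ) {j : Fin N} (hγ : γ j ≠ 0) :
    LinearIndependent ℝ (Function.update v j (∑ l, γ l • v l)) := by
  classical
  rw [Fintype.linearIndependent_iff]
  intro g hg
  set u := ∑ l, γ l • v l with hu
  have h2 : ∑ l, ((if l = j then 0 else g l) + g j * γ l) • v l
      = ∑ l, (if l = j then 0 else g l) • v l + ∑ l, (g j * γ l) • v l := by
    rw [← Finset.sum_add_distrib]
    congr 1
    funext l
    rw [add_smul]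
  have h3 : ∑ l, (if l = j then (0:ℝ) else g l) • v l = ∑ l ∈ Finset.univ.erase j, g l • v l := by
    have he := Finset.sum_erase (Finset.univ)
      (f := fun l => (if l = j then (0:ℝ) else g l) • v l) (a := j) (by simp)
    rw [← he]
    apply Finset.sum_congr rfl
    intro l hl
    have hlj : l ≠ j := Finset.ne_of_mem_erase hl
    simp [hlj]
  have h4 : g j • u = ∑ l, (g j * γ l) • v l := by
    rw [hu, Finset.smul_sum]
    congr 1
    funext l
    rw [smul_smul]
  have h1 : (fun l => g l • (Function.update v j u) l)
      = Function.update (fun l => g l • v l) j (g j • u) := by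
    funext l
    by_cases hl : l = j
    · subst hl; simp
    · simp [Function.update_of_ne hl]
  have hexp : ∑ l, g l • (Function.update v j u) l
      = ∑ l, ((if l = j then 0 else g l) + g j * γ l) • v l := by
    calc ∑ l, g l • (Function.update v j u) l
        = ∑ l, Function.update (fun l => g l • v l) j (g j • u) l := by rw [h1]
    _ = g j • u + ∑ l ∈ Finset.univ.erase j, g l • v l := by
        rw [Finset.sum_update_of_mem (Finset.mem_univ j), Finset.sdiff_singleton_eq_erase]
    _ = ∑ l, ((if l = j then 0 else g l) + g j * γ l) • v l := by
        rw [h2, ← h3, ← h4]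
        exact add_comm _ _
  rw [hexp] at hg
  have hall := Fintype.linearIndependent_iff.1 hli _ hg
  have hgj : g j = 0 := by
    have hj := hall j
    rw [if_pos rfl, zero_add] at hj
    rcases mul_eq_zero.1 hj with h | h
    · exact h
    · exact absurd h hγ
  intro i
  by_cases hi : i = j
  · rw [hi]; exact hgj
  · have hi2 := hall i
    rw [if_neg hi, hgj, zero_mul, add_zero] at hi2
    exact hi2


/-- embed `ℝ^m` at height 0 in `ℝ^(m+1)` -/
def iota {m : ℕ} : (Fin m → ℝ) →ₗ[ℝ] (Fin (m+1) → ℝ) where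
  toFun v := Fin.snoc v 0
  map_add' a b := by
    funext i
    refine Fin.lastCases ?_ ?_ i <;> simp
  map_smul' c a := by
    funext i
    refine Fin.lastCases ?_ ?_ i <;> simp

lemma lift_eq_add_iota (p q0 : Fin m → ℝ) : lift p = lift q0 + iota (p - q0) := by
  funext i
  refine Fin.lastCases ?_ ?_ i <;> simp [iota, lift]

lemma lift_ne_zero (p : Fin m → ℝ) : lift p ≠ 0 := by
  intro h
  have := congrArg deg h
  simp at this

lemma linIndep_card_le {P : Set (Fin m → ℝ)} {d : ℕ}
    (hdim : Module.finrank ℝ (vectorSpan ℝ P) = d) {q0 : Fin m → ℝ} (hq0 : q0 ∈ P)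
    {N : ℕ} {v : Fin N → Fin (m+1) → ℝ} (hv : ∀ l, v l ∈ KC P)
    (hli : LinearIndependent ℝ v) : N ≤ d + 1 := by
  set S1 := Submodule.span ℝ {lift q0} ⊔ (vectorSpan ℝ P).map iota with hS1
  have hKC : KC P ≤ S1 := by
    rw [KC]
    apply Submodule.span_le.2
    rintro y ⟨c, p, hc, hp, rfl⟩
    apply Submodule.smul_mem
    rw [lift_eq_add_iota p q0]
    refine Submodule.add_mem _ (Submodule.mem_sup_left (Submodule.subset_span rfl))
      (Submodule.mem_sup_right ?_)
    have hvs : p - q0 ∈ vectorSpan ℝ P := by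
      have := vsub_mem_vectorSpan ℝ hp hq0
      simpa using this
    exact Submodule.mem_map_of_mem hvs
  have h2 : Module.finrank ℝ (Submodule.span ℝ {lift q0}) = 1 :=
    finrank_span_singleton (lift_ne_zero q0)
  have h3 : Module.finrank ℝ ((vectorSpan ℝ P).map (iota (m := m))) ≤ d := by
    refine le_trans (Submodule.finrank_map_le _ _) (le_of_eq hdim)
  have h1 : Module.finrank ℝ S1 ≤ d + 1 := by
    have hs := Submodule.finrank_sup_add_finrank_inf_eq (Submodule.span ℝ {lift q0})
      ((vectorSpan ℝ P).map iota)
    rw [← hS1] at hs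
    omega
  have h4 : Module.finrank ℝ (Submodule.span ℝ (Set.range v)) = N := by
    rw [finrank_span_eq_card hli, Fintype.card_fin]
  have h5 : Submodule.span ℝ (Set.range v) ≤ S1 := by
    apply Submodule.span_le.2
    rintro x ⟨l, rfl⟩
    exact hKC (hv l)
  have := Submodule.finrank_mono h5
  omega

lemma update_cons_succ {n : ℕ} {β : Type*} (A : β) (B : Fin n → β) (j : Fin n) (u : β) :
    Function.update (Fin.cons A B : Fin (n+1) → β) j.succ u
      = Fin.cons A (Function.update B j u) := by
  classical
  funext l
  refine Fin.cases ?_ ?_ l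
  · rw [Function.update_of_ne (Fin.succ_ne_zero j).symm]
    simp
  · intro i
    by_cases hi : i = j
    · subst hi
      simp
    · rw [Function.update_of_ne (fun h => hi (Fin.succ_injective _ h))]
      simp [Function.update_of_ne hi]


lemma lift_update {n : ℕ} (b : Fin n → Fin m → ℝ) (j : Fin n) (p : Fin m → ℝ) :
    (fun i => lift (Function.update b j p i))
      = Function.update (fun i => lift (b i)) j (lift p) := by
  classical
  funext i
  by_cases hi : i = j
  · subst hi; simp
  · rw [Function.update_of_ne hi, Function.update_of_ne hi]

set_option maxHeartbeats 1600000 in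
lemma lemK {P V : Set (Fin m → ℝ)} {d : ℕ} (hd : 2 ≤ d)
    (hV : V.Finite) (hP : P = convexHull ℝ V) :
    ∀ N : ℕ, ∀ n : ℕ, n ≤ d → ∀ qpt : Fin m → ℝ,
      qpt ∈ intrinsicInterior ℝ P → isLat qpt →
      ∀ t : ℝ, 0 < t → ∀ c : Fin n → ℝ, (∀ i, 0 ≤ c i) →
      ∀ b : Fin n → Fin m → ℝ, (∀ i, b i ∈ P) → (∀ i, isLat (b i)) →
      LinearIndependent ℝ
        (Fin.cons (lift qpt) (fun i => lift (b i)) : Fin (n+1) → Fin (m+1) → ℝ) →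
      ∀ y : Fin (m+1) → ℝ, isLat y → (d:ℝ) ≤ deg y →
      y = t • lift qpt + ∑ i, c i • lift (b i) →
      {x ∈ hul qpt b | isLat x}.ncard ≤ N →
      ∃ a, a ∈ P ∧ isLat a ∧ y - lift a ∈ intrinsicInterior ℝ (coneOf P) := by
  classical
  intro N
  induction N with
  | zero =>
      intro n hn qpt hq hqlat t ht c hc b hbP hblat hli y hylat hyd hrep hcard
      exfalso
      have hconv : Convex ℝ P := hP ▸ convex_convexHull ℝ V
      have hbdd : Bornology.IsBounded P := by
        rw [hP]; exact isBounded_convexHull.2 hV.isBounded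
      have hsub : {x ∈ hul qpt b | isLat x} ⊆ {x ∈ P | isLat x} := fun x hx =>
        ⟨hul_subset hconv (intrinsicInterior_subset hq) hbP hx.1, hx.2⟩
      have hfin : {x ∈ hul qpt b | isLat x}.Finite := (lat_finite hbdd).subset hsub
      have hpos : 0 < {x ∈ hul qpt b | isLat x}.ncard :=
        (Set.ncard_pos hfin).2 ⟨qpt, q_mem_hul qpt b, hqlat⟩
      omega
  | succ N ih =>
      intro n hn qpt hq hqlat t ht c hc b hbP hblat hli y hylat hyd hrep hcard
      have hconv : Convex ℝ P := hP ▸ convex_convexHull ℝ V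
      have hqP : qpt ∈ P := intrinsicInterior_subset hq
      have hPne : P.Nonempty := ⟨qpt, hqP⟩
      have hbdd : Bornology.IsBounded P := by
        rw [hP]; exact isBounded_convexHull.2 hV.isBounded
      have hfin : {x ∈ hul qpt b | isLat x}.Finite :=
        (lat_finite hbdd).subset (fun x hx =>
          ⟨hul_subset hconv hqP hbP hx.1, hx.2⟩)
      by_cases hA : ∃ i, 1 ≤ c i
      · obtain ⟨i, hci⟩ := hA
        refine ⟨b i, hbP i, hblat i, ?_⟩
        have hsplit : ∑ l, c l • lift (b l)
            = c i • lift (b i) + ∑ l ∈ Finset.univ.erase i, c l • lift (b l) :=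
          (Finset.add_sum_erase _ _ (Finset.mem_univ i)).symm
        have hkey : y - lift (b i) = t • lift qpt +
            ((c i - 1) • lift (b i) + ∑ l ∈ Finset.univ.erase i, c l • lift (b l)) := by
          rw [hrep, hsplit, sub_smul, one_smul]
          abel
        rw [hkey]
        refine riC_add hconv hPne (riC_smul hPne ht (lift_mem_riC hq)) ?_
        refine coneOf_add hconv (mem_coneOf (by linarith) (hbP i)) ?_
        exact coneOf_sum_mem hconv hPne _ _ _ (fun l _ => hc l) (fun l _ => hbP l)
      by_cases hB : 1 < t
      · refine ⟨qpt, hqP, hqlat, ?_⟩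
        have hkey : y - lift qpt = (t - 1) • lift qpt + ∑ l, c l • lift (b l) := by
          rw [hrep, sub_smul, one_smul]
          abel
        rw [hkey]
        refine riC_add hconv hPne (riC_smul hPne (by linarith) (lift_mem_riC hq)) ?_
        exact coneOf_sum_mem hconv hPne _ _ _ (fun l _ => hc l) (fun l _ => hbP l)
      push_neg at hA hB
      have hd2 : (2:ℝ) ≤ (d:ℝ) := by exact_mod_cast hd
      have hdegy : deg y = t + ∑ i, c i := by
        rw [hrep, deg_add, deg_smul, deg_lift, deg_sum, mul_one]
        congr 1
        apply Finset.sum_congr rfl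
        intro i _
        rw [deg_smul, deg_lift, mul_one]
      have hn1 : 1 ≤ n := by
        by_contra h
        have hn0 : n = 0 := by omega
        subst hn0
        rw [hdegy] at hyd
        simp only [Finset.univ_eq_empty, Finset.sum_empty, add_zero] at hyd
        linarith
      have hne : (Finset.univ : Finset (Fin n)).Nonempty := by
        haveI : Nonempty (Fin n) := Fin.pos_iff_nonempty.1 (by omega)
        exact Finset.univ_nonempty
      have hsumlt : ∑ i, c i < n := by
        calc ∑ i, c i < ∑ _i : Fin n, (1:ℝ) :=
          Finset.sum_lt_sum_of_nonempty hne (fun i _ => hA i)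
        _ = n := by simp
      obtain ⟨K, hK⟩ := isLat_deg_int hylat
      have hnd' : (n:ℝ) ≤ d := by exact_mod_cast hn
      have hdegyd : deg y = d := by
        have h1' : (d:ℤ) ≤ K := by
          have : (d:ℝ) ≤ K := by rw [← hK]; exact hyd
          exact_mod_cast this
        have h2' : K < (d:ℤ) + 1 := by
          have : (K:ℝ) < d + 1 := by
            rw [← hK, hdegy]; linarith
          exact_mod_cast this
        have hKd : K = (d:ℤ) := by omega
        rw [hK, hKd]; norm_num
      have hnd : n = d := by
        have h1 : (d:ℝ) < n + 1 := by
          rw [← hdegyd, hdegy]; linarith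
        have : (d:ℕ) < n + 1 := by exact_mod_cast h1
        omega
      have hndR : (n:ℝ) = (d:ℝ) := by exact_mod_cast hnd
      have hcpos : ∀ i, 0 < c i := by
        intro i
        have hsplit : ∑ l, c l = c i + ∑ l ∈ Finset.univ.erase i, c l :=
          (Finset.add_sum_erase _ _ (Finset.mem_univ i)).symm
        have hcard_er : (Finset.univ.erase i).card = n - 1 := by
          rw [Finset.card_erase_of_mem (Finset.mem_univ i), Finset.card_univ, Fintype.card_fin]
        have hne' : (Finset.univ.erase i).Nonempty := by
          rw [← Finset.card_pos, hcard_er]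
          omega
        have herlt : ∑ l ∈ Finset.univ.erase i, c l < (n:ℝ) - 1 := by
          calc ∑ l ∈ Finset.univ.erase i, c l < ∑ _l ∈ Finset.univ.erase i, (1:ℝ) :=
            Finset.sum_lt_sum_of_nonempty hne' (fun l _ => hA l)
          _ = ((n:ℝ) - 1) := by
            rw [Finset.sum_const, hcard_er, nsmul_eq_mul, mul_one]
            have : (1:ℕ) ≤ n := hn1
            push_cast [Nat.cast_sub this]
            ring
        have := hdegyd
        rw [hdegy, hsplit] at this
        rw [hndR] at herlt
        linarith
      set u : Fin (m+1) → ℝ := (lift qpt + ∑ i, lift (b i)) - y with hu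
      have hudeg : deg u = 1 := by
        rw [hu, deg_sub, deg_add, deg_lift, deg_sum]
        simp only [deg_lift]
        rw [Finset.sum_const, Finset.card_univ, Fintype.card_fin, nsmul_eq_mul, mul_one,
          hdegyd, hndR]
        ring
      set p : Fin m → ℝ := pr u with hp
      have hup : lift p = u := by
        rw [hp]; exact (eq_lift_pr hudeg).symm
      have hplat : isLat p := by
        apply isLat_pr
        rw [hu]
        exact isLat_sub (isLat_add (isLat_lift hqlat)
          (isLat_sum _ _ fun i _ => isLat_lift (hblat i))) hylat
      have hurep : u = (1 - t) • lift qpt + ∑ i, (1 - c i) • lift (b i) := by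
        rw [hu, hrep]
        simp only [sub_smul, one_smul, Finset.sum_sub_distrib]
        abel
      have hsum1c : ∑ i : Fin n, (1 - c i) = t := by
        rw [Finset.sum_sub_distrib, Finset.sum_const, Finset.card_univ, Fintype.card_fin,
          nsmul_eq_mul, mul_one]
        have := hdegyd
        rw [hdegy] at this
        rw [hndR]
        linarith
      have hp_hul : p ∈ hul qpt b := by
        refine ⟨Fin.cons (1-t) (fun i => 1 - c i), ?_, ?_, ?_⟩
        · intro l
          refine Fin.cases ?_ ?_ l
          · simp only [Fin.cons_zero]; linarith
          · intro i; simp only [Fin.cons_succ]; linarith [hA i]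
        · rw [Fin.sum_univ_succ]
          simp only [Fin.cons_zero, Fin.cons_succ]
          rw [hsum1c]; ring
        · simp only [Fin.cons_zero, Fin.cons_succ]
          rw [hup, hurep]
      have hpP : p ∈ P := hul_subset hconv hqP hbP hp_hul
      have hγsum : (∑ l, (Fin.cons (1-t) (fun i => 1 - c i) : Fin (n+1) → ℝ) l •
          (Fin.cons (lift qpt) (fun i => lift (b i)) : Fin (n+1) → Fin (m+1) → ℝ) l)
          = lift p := by
        rw [Fin.sum_univ_succ]
        simp only [Fin.cons_zero, Fin.cons_succ]
        rw [hup, hurep]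
      by_cases hBr : t < 1 ∧ ∀ i, t * (1 - c i) ≤ c i * (1 - t)
      · -- branch 0 : exchange qpt for p
        obtain ⟨hlt1, hble⟩ := hBr
        have h1t : (0:ℝ) < 1 - t := by linarith
        set σ := t / (1 - t) with hσ
        have hσpos : 0 < σ := div_pos ht h1t
        have hσ1t : σ * (1 - t) = t := by
          rw [hσ]; field_simp
        set c' : Fin n → ℝ := fun i => c i - σ * (1 - c i) with hc'
        have hc'0 : ∀ i, 0 ≤ c' i := by
          intro i
          have : σ * (1 - c i) ≤ c i := by
            rw [hσ, div_mul_eq_mul_div, div_le_iff₀ h1t]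
            exact hble i
          simp only [hc']
          linarith
        have hpri : p ∈ intrinsicInterior ℝ P := by
          set r : Fin m → ℝ := t⁻¹ • (∑ i, (1 - c i) • b i) with hr
          have hrP : r ∈ P := by
            rw [hr, Finset.smul_sum]
            simp only [smul_smul]
            refine Convex.sum_mem hconv (fun i _ => ?_) ?_ (fun i _ => hbP i)
            · have := hA i
              have h0 : 0 ≤ 1 - c i := by linarith
              positivity
            · rw [← Finset.mul_sum, hsum1c, inv_mul_cancel₀ (ne_of_gt ht)]
          have hpcomb : p = (1 - t) • qpt + t • r := by
            have h1 : t • r = ∑ i, (1 - c i) • b i := by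
              rw [hr, smul_smul, mul_inv_cancel₀ (ne_of_gt ht), one_smul]
            rw [h1]
            have := congrArg pr hurep
            rw [← hup, pr_lift, pr_add, pr_smul, pr_lift, pr_sum] at this
            simp only [pr_smul, pr_lift] at this
            exact this
          rw [hpcomb]
          exact mem_ri_comb hconv hq hrP (le_of_lt ht) hlt1
        have hrep' : y = σ • lift p + ∑ i, c' i • lift (b i) := by
          rw [hup, hurep, smul_add, smul_smul, hσ1t, Finset.smul_sum]
          simp only [smul_smul]
          rw [hrep, add_assoc, ← Finset.sum_add_distrib]
          congr 1
          apply Finset.sum_congr rfl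
          intro i _
          rw [← add_smul, hc']
          congr 1
          ring
        have hnewli : LinearIndependent ℝ
            (Fin.cons (lift p) (fun i => lift (b i)) : Fin (n+1) → Fin (m+1) → ℝ) := by
          have hγ0 : (Fin.cons (1-t) (fun i => 1 - c i) : Fin (n+1) → ℝ) 0 ≠ 0 := by
            simp only [Fin.cons_zero]
            linarith
          have hexch := linIndep_exchange hli (Fin.cons (1-t) (fun i => 1 - c i)) hγ0
          rw [hγsum] at hexch
          rwa [Fin.update_cons_zero] at hexch
        have hqnot : qpt ∉ hul p b := by
          rintro ⟨μ, hμ0, hμ1, hμrep⟩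
          set g : Fin (n+1) → ℝ :=
            Fin.cons (μ 0 * (1-t) - 1) (fun i => μ 0 * (1 - c i) + μ i.succ) with hg
          have hexp : lift qpt = μ 0 • ((1 - t) • lift qpt +
              ∑ i, (1 - c i) • lift (b i)) + ∑ i, μ i.succ • lift (b i) := by
            rw [← hurep, ← hup]; exact hμrep
          have hzero : ∑ l, g l • (Fin.cons (lift qpt)
              (fun i => lift (b i)) : Fin (n+1) → Fin (m+1) → ℝ) l = 0 := by
            rw [Fin.sum_univ_succ]
            simp only [hg, Fin.cons_zero, Fin.cons_succ]
            have hgoalsum : ∑ i, (μ 0 * (1 - c i) + μ i.succ) • lift (b i)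
                = μ 0 • (∑ i, (1 - c i) • lift (b i)) + ∑ i, μ i.succ • lift (b i) := by
              rw [Finset.smul_sum]
              simp only [smul_smul]
              rw [← Finset.sum_add_distrib]
              apply Finset.sum_congr rfl
              intro i _
              rw [add_smul]
            rw [hgoalsum]
            linear_combination (norm := module) -hexp
          have hall := Fintype.linearIndependent_iff.1 hli g hzero
          have h0 := hall 0
          simp only [hg, Fin.cons_zero] at h0
          have hμ0pos : 0 < μ 0 := by nlinarith [h0, h1t]
          have hi := hall (⟨0, by omega⟩ : Fin n).succ
          simp only [hg, Fin.cons_succ] at hi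
          have h1 : 0 < μ 0 * (1 - c (⟨0, by omega⟩ : Fin n)) := by
            have := hA (⟨0, by omega⟩ : Fin n)
            nlinarith
          have h2 : 0 ≤ μ (⟨0, by omega⟩ : Fin n).succ := hμ0 _
          linarith
        have hnewsub : hul p b ⊆ hul qpt b :=
          hul_subset (hul_convex qpt b) hp_hul (b_mem_hul qpt b)
        have hss : {x ∈ hul p b | isLat x} ⊂ {x ∈ hul qpt b | isLat x} := by
          constructor
          · exact fun x hx => ⟨hnewsub hx.1, hx.2⟩
          · intro hcontra
            exact hqnot (hcontra ⟨q_mem_hul qpt b, hqlat⟩).1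
        have hcard' : {x ∈ hul p b | isLat x}.ncard ≤ N := by
          have := Set.ncard_lt_ncard hss hfin
          omega
        exact ih n hn p hpri hplat σ hσpos c' hc'0 b hbP hblat hnewli y hylat hyd hrep' hcard'
      · -- branch j : exchange b j for p
        obtain ⟨j, _, hjmin⟩ := Finset.exists_min_image Finset.univ
          (fun i => c i / (1 - c i)) hne
        have h1cj : (0:ℝ) < 1 - c j := by linarith [hA j]
        set σ := c j / (1 - c j) with hσ
        have hσ0 : 0 ≤ σ := div_nonneg (hc j) (le_of_lt h1cj)
        have hσcj : σ * (1 - c j) = c j := div_mul_cancel₀ _ (ne_of_gt h1cj)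
        have hble : ∀ i, σ * (1 - c i) ≤ c i := by
          intro i
          have h1ci : (0:ℝ) < 1 - c i := by linarith [hA i]
          have := hjmin i (Finset.mem_univ i)
          rw [div_le_div_iff₀ h1cj h1ci] at this
          rw [hσ, div_mul_eq_mul_div, div_le_iff₀ h1cj]
          linarith
        have htpos : 0 < t - σ * (1 - t) := by
          rcases lt_or_eq_of_le hB with hlt | heq
          · have : ¬ (∀ i, t * (1 - c i) ≤ c i * (1 - t)) := by
              intro hcontra
              exact hBr ⟨hlt, hcontra⟩
            push_neg at this
            obtain ⟨i0, hi0⟩ := this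
            have h1t : (0:ℝ) < 1 - t := by linarith
            have h1ci0 : (0:ℝ) < 1 - c i0 := by linarith [hA i0]
            have hσlt : σ * (1 - t) < t := by
              have hj0 := hjmin i0 (Finset.mem_univ i0)
              rw [div_le_div_iff₀ h1cj h1ci0] at hj0
              have : σ * (1 - t) ≤ (c i0 / (1 - c i0)) * (1-t) := by
                have := hjmin i0 (Finset.mem_univ i0)
                apply mul_le_mul_of_nonneg_right this (le_of_lt h1t)
              refine lt_of_le_of_lt this ?_
              rw [div_mul_eq_mul_div, div_lt_iff₀ h1ci0]
              nlinarith
            linarith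
          · rw [← heq]; simpa using ht
        set t' := t - σ * (1 - t) with ht'
        set b' : Fin n → Fin m → ℝ := Function.update b j p with hb'
        set c'' : Fin n → ℝ := fun i => if i = j then σ else c i - σ * (1 - c i) with hc''
        have hc''0 : ∀ i, 0 ≤ c'' i := by
          intro i
          simp only [hc'']
          by_cases hi : i = j
          · rw [if_pos hi]; exact hσ0
          · rw [if_neg hi]
            linarith [hble i]
        have hb'P : ∀ i, b' i ∈ P := by
          intro i
          simp only [hb', Function.update_apply]
          by_cases hi : i = j
          · rw [if_pos hi]; exact hpP
          · rw [if_neg hi]; exact hbP i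
        have hb'lat : ∀ i, isLat (b' i) := by
          intro i
          simp only [hb', Function.update_apply]
          by_cases hi : i = j
          · rw [if_pos hi]; exact hplat
          · rw [if_neg hi]; exact hblat i
        have hfun : (fun i => c'' i • lift (b' i))
            = Function.update (fun i => (c i - σ * (1 - c i)) • lift (b i)) j (σ • lift p) := by
          funext i
          by_cases hi : i = j
          · subst hi
            simp only [hc'', hb', if_pos rfl, Function.update_self]
          · simp only [hc'', hb', if_neg hi, Function.update_of_ne hi]
        have hrep' : y = t' • lift qpt + ∑ i, c'' i • lift (b' i) := by
          rw [hfun, Finset.sum_update_of_mem (Finset.mem_univ j),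
            Finset.sdiff_singleton_eq_erase]
          rw [hup, hurep, smul_add, smul_smul, Finset.smul_sum]
          simp only [smul_smul]
          have hsplitσ : ∑ i, (σ * (1 - c i)) • lift (b i)
              = (σ * (1 - c j)) • lift (b j)
                + ∑ i ∈ Finset.univ.erase j, (σ * (1 - c i)) • lift (b i) :=
            (Finset.add_sum_erase _ _ (Finset.mem_univ j)).symm
          rw [hsplitσ, hσcj]
          have hmerge : ∑ i ∈ Finset.univ.erase j, (σ * (1 - c i)) • lift (b i)
              + ∑ i ∈ Finset.univ.erase j, (c i - σ * (1 - c i)) • lift (b i)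
              = ∑ i ∈ Finset.univ.erase j, c i • lift (b i) := by
            rw [← Finset.sum_add_distrib]
            apply Finset.sum_congr rfl
            intro i _
            rw [← add_smul]
            congr 1
            ring
          have hsplitc : ∑ i, c i • lift (b i)
              = c j • lift (b j) + ∑ i ∈ Finset.univ.erase j, c i • lift (b i) :=
            (Finset.add_sum_erase _ _ (Finset.mem_univ j)).symm
          rw [hrep, hsplitc]
          have ht'' : (t' + σ * (1 - t)) = t := by rw [ht']; ring
          calc t • lift qpt + (c j • lift (b j) + ∑ i ∈ Finset.univ.erase j, c i • lift (b i))
              = t • lift qpt + (c j • lift (b j) +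
                (∑ i ∈ Finset.univ.erase j, (σ * (1 - c i)) • lift (b i)
                  + ∑ i ∈ Finset.univ.erase j, (c i - σ * (1 - c i)) • lift (b i))) := by
                rw [hmerge]
          _ = (t' + σ * (1 - t)) • lift qpt + (c j • lift (b j) +
                (∑ i ∈ Finset.univ.erase j, (σ * (1 - c i)) • lift (b i)
                  + ∑ i ∈ Finset.univ.erase j, (c i - σ * (1 - c i)) • lift (b i))) := by
                rw [ht'']
          _ = _ := by
                rw [add_smul]
                abel
        have hnewli : LinearIndependent ℝ
            (Fin.cons (lift qpt) (fun i => lift (b' i)) : Fin (n+1) → Fin (m+1) → ℝ) := by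
          have hγj : (Fin.cons (1-t) (fun i => 1 - c i) : Fin (n+1) → ℝ) j.succ ≠ 0 := by
            simp only [Fin.cons_succ]
            linarith
          have hexch := linIndep_exchange hli (Fin.cons (1-t) (fun i => 1 - c i)) hγj
          rw [hγsum, update_cons_succ] at hexch
          rw [hb', lift_update]
          exact hexch
        have hbjnot : b j ∉ hul qpt b' := by
          rintro ⟨μ, hμ0, hμ1, hμrep⟩
          have hupdsum : ∑ i, μ i.succ • lift (b' i)
              = μ j.succ • lift p + ∑ i ∈ Finset.univ.erase j, μ i.succ • lift (b i) := by
            have hfun2 : (fun i => μ i.succ • lift (b' i))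
                = Function.update (fun i => μ i.succ • lift (b i)) j (μ j.succ • lift p) := by
              funext i
              by_cases hi : i = j
              · subst hi; simp only [hb', Function.update_self]
              · simp only [hb', Function.update_of_ne hi]
            rw [hfun2, Finset.sum_update_of_mem (Finset.mem_univ j),
              Finset.sdiff_singleton_eq_erase]
          set g : Fin (n+1) → ℝ := Fin.cons (μ 0 + μ j.succ * (1-t))
            (fun i => if i = j then μ j.succ * (1 - c j) - 1
              else μ j.succ * (1 - c i) + μ i.succ) with hg
          have hexp : lift (b j) = μ 0 • lift qpt + (μ j.succ • ((1 - t) • lift qpt +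
              ((1 - c j) • lift (b j) + ∑ i ∈ Finset.univ.erase j, (1 - c i) • lift (b i)))
              + ∑ i ∈ Finset.univ.erase j, μ i.succ • lift (b i)) := by
            have hsplit1c : ∑ i, (1 - c i) • lift (b i)
                = (1 - c j) • lift (b j)
                  + ∑ i ∈ Finset.univ.erase j, (1 - c i) • lift (b i) :=
              (Finset.add_sum_erase _ _ (Finset.mem_univ j)).symm
            rw [← hsplit1c, ← hurep, ← hup, ← hupdsum]
            exact hμrep
          have hzero : ∑ l, g l • (Fin.cons (lift qpt)
              (fun i => lift (b i)) : Fin (n+1) → Fin (m+1) → ℝ) l = 0 := by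
            rw [Fin.sum_univ_succ]
            simp only [hg, Fin.cons_zero, Fin.cons_succ]
            have hitesum : ∑ i, (if i = j then μ j.succ * (1 - c j) - 1
                else μ j.succ * (1 - c i) + μ i.succ) • lift (b i)
                = (μ j.succ * (1 - c j) - 1) • lift (b j)
                  + ∑ i ∈ Finset.univ.erase j,
                    (μ j.succ * (1 - c i) + μ i.succ) • lift (b i) := by
              have hsp := (Finset.add_sum_erase Finset.univ
                (fun i => (if i = j then μ j.succ * (1 - c j) - 1
                  else μ j.succ * (1 - c i) + μ i.succ) • lift (b i)) (Finset.mem_univ j)).symm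
              rw [hsp, if_pos rfl]
              congr 1
              apply Finset.sum_congr rfl
              intro i hi
              rw [if_neg (Finset.ne_of_mem_erase hi)]
            rw [hitesum]
            have hgoalsum : ∑ i ∈ Finset.univ.erase j,
                (μ j.succ * (1 - c i) + μ i.succ) • lift (b i)
                = μ j.succ • (∑ i ∈ Finset.univ.erase j, (1 - c i) • lift (b i))
                  + ∑ i ∈ Finset.univ.erase j, μ i.succ • lift (b i) := by
              rw [Finset.smul_sum]
              simp only [smul_smul]
              rw [← Finset.sum_add_distrib]
              apply Finset.sum_congr rfl
              intro i _
              rw [add_smul]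
            rw [hgoalsum]
            linear_combination (norm := module) -hexp
          have hall := Fintype.linearIndependent_iff.1 hli g hzero
          have hj0 := hall j.succ
          simp only [hg, Fin.cons_succ] at hj0
          rw [if_true] at hj0
          have hμjpos : 0 < μ j.succ := by nlinarith [hj0, h1cj]
          obtain ⟨i0, hi0ne⟩ : ∃ i0 : Fin n, i0 ≠ j := by
            have h2n : 2 ≤ n := by omega
            by_cases hj' : (⟨0, by omega⟩ : Fin n) = j
            · refine ⟨⟨1, by omega⟩, ?_⟩
              rw [← hj']
              intro hcon
              have := congrArg Fin.val hcon
              simp at this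
            · exact ⟨⟨0, by omega⟩, hj'⟩
          have hi0 := hall i0.succ
          simp only [hg, Fin.cons_succ] at hi0
          rw [if_neg hi0ne] at hi0
          have h1 : 0 < μ j.succ * (1 - c i0) := by
            have := hA i0
            nlinarith
          have h2 : 0 ≤ μ i0.succ := hμ0 _
          linarith
        have hnewsub : hul qpt b' ⊆ hul qpt b := by
          refine hul_subset (hul_convex qpt b) (q_mem_hul qpt b) ?_
          intro i
          simp only [hb', Function.update_apply]
          by_cases hi : i = j
          · rw [if_pos hi]; exact hp_hul
          · rw [if_neg hi]; exact b_mem_hul qpt b i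
        have hss : {x ∈ hul qpt b' | isLat x} ⊂ {x ∈ hul qpt b | isLat x} := by
          constructor
          · exact fun x hx => ⟨hnewsub hx.1, hx.2⟩
          · intro hcontra
            exact hbjnot (hcontra ⟨b_mem_hul qpt b j, hblat j⟩).1
        have hcard' : {x ∈ hul qpt b' | isLat x}.ncard ≤ N := by
          have := Set.ncard_lt_ncard hss hfin
          omega
        exact ih n hn qpt hq hqlat t' htpos c'' hc''0 b' hb'P hb'lat hnewli y hylat hyd
          hrep' hcard'


lemma coneOf_convex {P : Set (Fin m → ℝ)} (hconv : Convex ℝ P) (hne : P.Nonempty) :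
    Convex ℝ (coneOf P) := by
  intro x hx y hy a bb ha hb hab
  exact coneOf_add hconv (coneOf_smul ha hx) (coneOf_smul hb hy)

lemma lift_sum_comb {ι : Type*} (s : Finset ι) (w : ι → ℝ) (z : ι → Fin m → ℝ)
    (h1 : ∑ i ∈ s, w i = 1) :
    lift (∑ i ∈ s, w i • z i) = ∑ i ∈ s, w i • lift (z i) := by
  have hdeg : deg (∑ i ∈ s, w i • lift (z i)) = 1 := by
    rw [deg_sum]
    simp only [deg_smul, deg_lift, mul_one]
    exact h1
  have hpr : pr (∑ i ∈ s, w i • lift (z i)) = ∑ i ∈ s, w i • z i := by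
    rw [pr_sum]
    apply Finset.sum_congr rfl
    intro i _
    rw [pr_smul, pr_lift]
  rw [eq_lift_pr hdeg, hpr]

lemma norm_lift_sub_le (a bb : Fin m → ℝ) : ‖lift a - lift bb‖ ≤ ‖a - bb‖ := by
  apply pi_norm_le_iff_of_nonneg (norm_nonneg _) |>.2
  intro i
  refine Fin.lastCases ?_ ?_ i
  · simp
  · intro j
    simp only [Pi.sub_apply, lift_castSucc]
    exact norm_le_pi_norm (a - bb) j

lemma norm_lift_le {R0 : ℝ} (hR0 : 0 ≤ R0) (p : Fin m → ℝ) (hp : ‖p‖ ≤ R0) :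
    ‖lift p‖ ≤ R0 + 1 := by
  apply pi_norm_le_iff_of_nonneg (by linarith) |>.2
  intro i
  refine Fin.lastCases ?_ ?_ i
  · simp; linarith
  · intro j
    simp only [lift_castSucc]
    calc ‖p j‖ ≤ ‖p‖ := norm_le_pi_norm p j
    _ ≤ R0 + 1 := by linarith

set_option maxHeartbeats 1600000 in
lemma claimD {P V : Set (Fin m → ℝ)} {d : ℕ} (hd : 2 ≤ d)
    (hV : V.Finite) (hVlat : ∀ p ∈ V, isLat p) (hP : P = convexHull ℝ V)
    (hdim : Module.finrank ℝ (vectorSpan ℝ P) = d)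
    {q : Fin m → ℝ} (hq : q ∈ intrinsicInterior ℝ P) (hqlat : isLat q)
    {y : Fin (m+1) → ℝ} (hy : y ∈ intrinsicInterior ℝ (coneOf P)) (hylat : isLat y)
    (hyd : (d:ℝ) ≤ deg y) :
    ∃ a, a ∈ P ∧ isLat a ∧ y - lift a ∈ intrinsicInterior ℝ (coneOf P) := by
  classical
  have hconv : Convex ℝ P := hP ▸ convex_convexHull ℝ V
  have hqP : q ∈ P := intrinsicInterior_subset hq
  have hPne : P.Nonempty := ⟨q, hqP⟩
  have hyC : y ∈ coneOf P := intrinsicInterior_subset hy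
  have hd2 : (2:ℝ) ≤ (d:ℝ) := by exact_mod_cast hd
  have hqK : lift q ∈ KC P := coneOf_subset_KC P (lift_mem_coneOf hqP)
  set T : Set ℝ := {s : ℝ | 0 ≤ s ∧ y - s • lift q ∈ coneOf P} with hT
  have h0T : (0:ℝ) ∈ T := ⟨le_refl 0, by simpa using hyC⟩
  have hTne : T.Nonempty := ⟨0, h0T⟩
  have hTbdd : ∀ s ∈ T, s ≤ deg y := by
    rintro s ⟨hs0, hsC⟩
    have := coneOf_deg_nonneg hsC
    simp only [deg_sub, deg_smul, deg_lift, mul_one] at this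
    linarith
  have hTbdd' : BddAbove T := ⟨deg y, fun s hs => hTbdd s hs⟩
  set tstar := sSup T with htstar
  have hTle : tstar ≤ deg y := csSup_le hTne (fun s hs => hTbdd s hs)
  -- tstar > 0
  have htstar_pos : 0 < tstar := by
    obtain ⟨hyK, ε, hε, hball⟩ := (mem_riC_iff hPne).1 hy
    have hnq : (0:ℝ) < ‖lift q‖ := by
      have : (1:ℝ) ≤ ‖lift q‖ := by simpa using abs_deg_le (lift q)
      linarith
    set s0 := ε / (2 * ‖lift q‖) with hs0
    have hs0pos : 0 < s0 := by positivity
    have hs0T : s0 ∈ T := by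
      refine ⟨le_of_lt hs0pos, ?_⟩
      refine hball _ ((KC P).sub_mem hyK ((KC P).smul_mem s0 hqK)) ?_
      have heq : y - s0 • lift q - y = -(s0 • lift q) := by ring_nf
      rw [heq, norm_neg, norm_smul, Real.norm_eq_abs, abs_of_pos hs0pos, hs0]
      have h2 : ε / (2 * ‖lift q‖) * ‖lift q‖ = ε / 2 := by
        field_simp
      rw [h2]; linarith
    exact lt_of_lt_of_le hs0pos (le_csSup hTbdd' hs0T)
  -- all smaller values are in T
  have hmemT : ∀ s, 0 ≤ s → s < tstar → s ∈ T := by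
    intro s hs0 hslt
    obtain ⟨t'', ht''T, ht''gt⟩ := exists_lt_of_lt_csSup hTne hslt
    have ht''pos : 0 < t'' := lt_of_le_of_lt hs0 ht''gt
    set θ := s / t'' with hθ
    have hθ0 : 0 ≤ θ := div_nonneg hs0 (le_of_lt ht''pos)
    have hθ1 : θ < 1 := by
      rw [hθ, div_lt_one ht''pos]; exact ht''gt
    refine ⟨hs0, ?_⟩
    have hcomb : y - s • lift q = (1 - θ) • y + θ • (y - t'' • lift q) := by
      have : θ * t'' = s := by rw [hθ]; field_simp
      rw [smul_sub, smul_smul, this]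
      module
    rw [hcomb]
    exact coneOf_convex hconv hPne hyC ht''T.2 (by linarith) hθ0 (by ring)
  -- the approximating sequence
  set tseq : ℕ → ℝ := fun nn => tstar - tstar / (nn+1) with htseq
  have htseqT : ∀ nn, tseq nn ∈ T := by
    intro nn
    have h1 : (0:ℝ) < (nn:ℝ) + 1 := by positivity
    have hdivpos : 0 < tstar / (nn+1) := div_pos htstar_pos h1
    have hdivle : tstar / (nn+1) ≤ tstar := by
      rw [div_le_iff₀ h1]
      nlinarith
    exact hmemT _ (by simp only [htseq]; linarith) (by simp only [htseq]; linarith)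
  have htseq_tendsto : Filter.Tendsto tseq Filter.atTop (nhds tstar) := by
    have h1 : Filter.Tendsto (fun nn : ℕ => tstar / (nn+1)) Filter.atTop (nhds 0) := by
      apply Filter.Tendsto.div_atTop (tendsto_const_nhds)
      exact Filter.tendsto_atTop_add_const_right _ _ tendsto_natCast_atTop_atTop
    have := Filter.Tendsto.sub (tendsto_const_nhds (x := tstar)) h1
    simpa using this
  have hchoice : ∀ nn : ℕ, ∃ cp : ℝ, ∃ pp : Fin m → ℝ,
      0 ≤ cp ∧ pp ∈ P ∧ y - tseq nn • lift q = cp • lift pp := fun nn => (htseqT nn).2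
  choose cc pp hcc hppP hrep_n using hchoice
  have hccval : ∀ nn, cc nn = deg y - tseq nn := by
    intro nn
    have := congrArg deg (hrep_n nn)
    simp only [deg_sub, deg_smul, deg_lift, mul_one] at this
    linarith
  have hlim1 : Filter.Tendsto (fun nn => y - tseq nn • lift q) Filter.atTop
      (nhds (y - tstar • lift q)) := by
    exact Filter.Tendsto.sub tendsto_const_nhds
      (Filter.Tendsto.smul htseq_tendsto tendsto_const_nhds)
  rcases eq_or_lt_of_le hTle with hcaseA | hcaseB
  · -- y is a multiple of lift q
    have hbddP : Bornology.IsBounded P := by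
      rw [hP]; exact isBounded_convexHull.2 hV.isBounded
    obtain ⟨R0, hR0⟩ := isBounded_iff_forall_norm_le.1 hbddP
    have hR0nn : 0 ≤ R0 := le_trans (norm_nonneg q) (hR0 q hqP)
    have hnormb : ∀ nn, ‖y - tseq nn • lift q‖ ≤ (deg y - tseq nn) * (R0 + 1) := by
      intro nn
      rw [hrep_n nn, norm_smul, Real.norm_eq_abs, abs_of_nonneg (hcc nn), ← hccval nn]
      apply mul_le_mul_of_nonneg_left _ (hcc nn)
      exact norm_lift_le hR0nn _ (hR0 _ (hppP nn))
    have hrhs : Filter.Tendsto (fun nn => (deg y - tseq nn) * (R0 + 1)) Filter.atTop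
        (nhds 0) := by
      have h1 : Filter.Tendsto (fun nn => deg y - tseq nn) Filter.atTop
          (nhds (deg y - tstar)) := Filter.Tendsto.sub tendsto_const_nhds htseq_tendsto
      rw [hcaseA] at h1
      simp only [sub_self] at h1
      have := h1.mul_const (R0 + 1)
      simpa using this
    have hzero := squeeze_zero_norm hnormb hrhs
    have hyq : y = tstar • lift q := by
      have h2 : y - tstar • lift q = 0 := tendsto_nhds_unique hlim1 hzero
      exact sub_eq_zero.1 h2
    refine ⟨q, hqP, hqlat, ?_⟩
    have hkey : y - lift q = (tstar - 1) • lift q := by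
      rw [hyq, sub_smul, one_smul]
    rw [hkey]
    have : 0 < tstar - 1 := by
      rw [hcaseA] at htstar_pos ⊢
      linarith
    exact riC_smul hPne this (lift_mem_riC hq)
  · -- main case : Caratheodory representation
    have hkt : 0 < deg y - tstar := by linarith
    have hPcomp : IsCompact P := by
      rw [hP]; exact hV.isCompact_convexHull (𝕜 := ℝ)
    obtain ⟨pstar, hpstarP, φ, hφ, hconv_p⟩ := hPcomp.tendsto_subseq hppP
    have hliftp : Filter.Tendsto (fun nn => lift (pp (φ nn))) Filter.atTop
        (nhds (lift pstar)) := by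
      rw [tendsto_iff_norm_sub_tendsto_zero]
      have hnz : Filter.Tendsto (fun nn => ‖pp (φ nn) - pstar‖) Filter.atTop (nhds 0) :=
        tendsto_iff_norm_sub_tendsto_zero.1 hconv_p
      exact squeeze_zero (fun nn => norm_nonneg _)
        (fun nn => norm_lift_sub_le _ _) hnz
    have htφ : Filter.Tendsto (fun nn => tseq (φ nn)) Filter.atTop (nhds tstar) :=
      htseq_tendsto.comp hφ.tendsto_atTop
    have hccφ : Filter.Tendsto (fun nn => cc (φ nn)) Filter.atTop
        (nhds (deg y - tstar)) := by
      have : (fun nn => cc (φ nn)) = fun nn => deg y - tseq (φ nn) := by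
        funext nn; rw [hccval]
      rw [this]
      exact Filter.Tendsto.sub tendsto_const_nhds htφ
    have hlim2 : Filter.Tendsto (fun nn => y - tseq (φ nn) • lift q) Filter.atTop
        (nhds (y - tstar • lift q)) :=
      Filter.Tendsto.sub tendsto_const_nhds (Filter.Tendsto.smul htφ tendsto_const_nhds)
    have hlim3 : Filter.Tendsto (fun nn => y - tseq (φ nn) • lift q) Filter.atTop
        (nhds ((deg y - tstar) • lift pstar)) := by
      have : (fun nn => y - tseq (φ nn) • lift q)
          = fun nn => cc (φ nn) • lift (pp (φ nn)) := by
        funext nn; rw [hrep_n]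
      rw [this]
      exact Filter.Tendsto.smul hccφ hliftp
    have hstar : y - tstar • lift q = (deg y - tstar) • lift pstar :=
      tendsto_nhds_unique hlim2 hlim3
    -- Caratheodory for pstar
    have hpstarV : pstar ∈ convexHull ℝ V := hP ▸ hpstarP
    rw [convexHull_eq_union] at hpstarV
    simp only [Set.mem_iUnion] at hpstarV
    obtain ⟨W0, hW0V, hW0ai, hpsW⟩ := hpstarV
    rw [Finset.convexHull_eq] at hpsW
    obtain ⟨w, hw0, hwsum, hwcm⟩ := hpsW
    rw [Finset.centerMass_eq_of_sum_1 _ _ hwsum] at hwcm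
    simp only [id] at hwcm
    set W : Finset (Fin m → ℝ) := W0.filter (fun v => 0 < w v) with hWdef
    have hWsum : ∑ v ∈ W, w v = 1 := by
      rw [hWdef, Finset.sum_filter_of_ne, hwsum]
      intro v hv hne
      rcases lt_or_eq_of_le (hw0 v hv) with h | h
      · exact h
      · exact absurd h.symm hne
    have hWcomb : ∑ v ∈ W, w v • v = pstar := by
      rw [hWdef, Finset.sum_filter_of_ne, hwcm]
      intro v hv hne
      rcases lt_or_eq_of_le (hw0 v hv) with h | h
      · exact h
      · exfalso; apply hne; rw [← h, zero_smul]
    set n' := W.card with hn'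
    set e := W.equivFin with he
    set b : Fin n' → Fin m → ℝ := fun i => (e.symm i : Fin m → ℝ) with hb
    have hbW : ∀ i, b i ∈ W := fun i => (e.symm i).2
    have hbW0 : ∀ i, b i ∈ W0 := fun i => Finset.mem_of_mem_filter _ (hbW i)
    have hbV : ∀ i, b i ∈ V := fun i => hW0V (hbW0 i)
    have hbP : ∀ i, b i ∈ P := fun i => by
      rw [hP]; exact subset_convexHull ℝ V (hbV i)
    have hblat : ∀ i, isLat (b i) := fun i => hVlat _ (hbV i)
    have hsum_conv : ∀ (F : (Fin m → ℝ) → Fin (m+1) → ℝ),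
        ∑ v ∈ W, F v = ∑ i : Fin n', F (b i) := by
      intro F
      rw [← Finset.sum_coe_sort W F]
      apply Fintype.sum_equiv e
      intro x
      simp [hb]
    set cW : Fin n' → ℝ := fun i => (deg y - tstar) * w (b i) with hcW
    have hcWpos : ∀ i, 0 < cW i := by
      intro i
      have := (Finset.mem_filter.1 (hbW i)).2
      simp only [hcW]
      positivity
    have hrepW : y = tstar • lift q + ∑ i : Fin n', cW i • lift (b i) := by
      have h1 : lift pstar = ∑ v ∈ W, w v • lift v := by
        rw [← hWcomb, lift_sum_comb _ _ _ hWsum]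
      have h2 : (deg y - tstar) • lift pstar = ∑ i : Fin n', cW i • lift (b i) := by
        rw [h1, Finset.smul_sum]
        simp only [smul_smul]
        rw [hsum_conv (fun v => ((deg y - tstar) * w v) • lift v)]
      rw [← h2, ← hstar]
      abel
    -- linear independence
    have hai_b : AffineIndependent ℝ b := by
      have hinj : Function.Injective
          (fun i : Fin n' => (⟨b i, Finset.mem_coe.2 (hbW0 i)⟩ :
            {x // x ∈ (W0 : Set (Fin m → ℝ))})) := by
        intro i1 i2 h12
        simp only [Subtype.mk.injEq] at h12
        rw [hb] at h12
        exact e.symm.injective (Subtype.ext h12)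
      have := hW0ai.comp_embedding
        ⟨fun i : Fin n' => (⟨b i, Finset.mem_coe.2 (hbW0 i)⟩ :
          {x // x ∈ (W0 : Set (Fin m → ℝ))}), hinj⟩
      exact this
    have hli_b : LinearIndependent ℝ (fun i => lift (b i)) := linIndep_lift hai_b
    have hqspan : lift q ∉ Submodule.span ℝ (Set.range (fun i => lift (b i))) := by
      intro hmem
      rw [Submodule.mem_span_range_iff_exists_fun] at hmem
      obtain ⟨γ, hγ⟩ := hmem
      have hWne : (Finset.univ : Finset (Fin n')).Nonempty := by
        by_contra hemp
        rw [Finset.not_nonempty_iff_eq_empty] at hemp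
        have : ∑ i : Fin n', cW i = deg y - tstar := by
          have h1 := congrArg deg hrepW
          rw [deg_add, deg_smul, deg_lift, mul_one, deg_sum] at h1
          simp only [deg_smul, deg_lift, mul_one] at h1
          linarith
        rw [hemp] at this
        simp at this
        linarith
      set ε := Finset.univ.inf' hWne (fun i => cW i / (|γ i| + 1)) with hε
      have hεpos : 0 < ε := by
        rw [hε, Finset.lt_inf'_iff]
        intro i _
        exact div_pos (hcWpos i) (by positivity)
      have hεle : ∀ i, ε * γ i ≤ cW i := by
        intro i
        have h1 : ε ≤ cW i / (|γ i| + 1) := Finset.inf'_le _ (Finset.mem_univ i)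
        have h2 : (0:ℝ) < |γ i| + 1 := by positivity
        have h3 : ε * (|γ i| + 1) ≤ cW i := by
          rw [← le_div_iff₀ h2]
          exact h1
        have h4 : γ i ≤ |γ i| := le_abs_self _
        nlinarith [mul_le_mul_of_nonneg_left h4 (le_of_lt hεpos), hεpos]
      have hnew : y - (tstar + ε) • lift q = ∑ i, (cW i - ε * γ i) • lift (b i) := by
        have hsub : ∑ i, (cW i - ε * γ i) • lift (b i)
            = ∑ i, cW i • lift (b i) - ε • lift q := by
          rw [← hγ, Finset.smul_sum]
          simp only [smul_smul]
          rw [← Finset.sum_sub_distrib]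
          apply Finset.sum_congr rfl
          intro i _
          rw [sub_smul]
        rw [hrepW, hsub, add_smul]
        abel
      have hTmem : tstar + ε ∈ T := by
        refine ⟨by linarith, ?_⟩
        rw [hnew]
        refine coneOf_sum_mem hconv hPne _ _ _ (fun i _ => ?_) (fun i _ => hbP i)
        linarith [hεle i]
      have := le_csSup hTbdd' hTmem
      linarith
    have hli : LinearIndependent ℝ
        (Fin.cons (lift q) (fun i => lift (b i)) : Fin (n'+1) → Fin (m+1) → ℝ) :=
      linearIndependent_fin_cons.2 ⟨hli_b, hqspan⟩
    -- dimension bound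
    have hn'd : n' ≤ d := by
      have hKCmem : ∀ l : Fin (n'+1),
          (Fin.cons (lift q) (fun i => lift (b i)) : Fin (n'+1) → Fin (m+1) → ℝ) l ∈ KC P := by
        intro l
        refine Fin.cases ?_ ?_ l
        · simpa using hqK
        · intro i
          simpa using coneOf_subset_KC P (lift_mem_coneOf (hbP i))
      have := linIndep_card_le hdim hqP hKCmem hli
      omega
    -- finiteness of the measure
    have hfin : {x ∈ hul q b | isLat x}.Finite := by
      have hbdd : Bornology.IsBounded P := by
        rw [hP]; exact isBounded_convexHull.2 hV.isBounded
      refine (lat_finite hbdd).subset ?_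
      rintro x ⟨hx1, hx2⟩
      exact ⟨hul_subset hconv hqP hbP hx1, hx2⟩
    obtain ⟨a, haP, halat, hari⟩ := lemK hd hV hP ({x ∈ hul q b | isLat x}.ncard)
      n' hn'd q hq hqlat tstar htstar_pos cW (fun i => le_of_lt (hcWpos i)) b hbP hblat
      hli y hylat hyd hrepW (le_refl _)
    exact ⟨a, haP, halat, hari⟩

end Stmt7Aux

open Stmt7Aux

/-- a lattice polytope of dimension `d ≥ 2` with an interior lattice
point satisfies `rdeg y ≤ d - 1` for all `y ∈ M*(P)`. -/
theorem stmt7 {m d : ℕ} (hd : 2 ≤ d) (P : Set (Fin m → ℝ)) (V : Set (Fin m → ℝ))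
    (hV : V.Finite) (hVlat : ∀ p ∈ V, isLat p) (hP : P = convexHull ℝ V)
    (hdim : Module.finrank ℝ (vectorSpan ℝ P) = d)
    (hint : ∃ p ∈ intrinsicInterior ℝ P, isLat p) :
    ∀ y ∈ Mstar P, ∃ z w, z ∈ Mstar P ∧ w ∈ Msemi P ∧ y = z + w ∧
      deg z ≤ (d : ℝ) - 1 := by
  obtain ⟨q, hq, hqlat⟩ := hint
  have hqP : q ∈ P := intrinsicInterior_subset hq
  have key : ∀ KN : ℕ, ∀ y ∈ Mstar P, deg y ≤ (KN:ℝ) →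
      ∃ z w, z ∈ Mstar P ∧ w ∈ Msemi P ∧ y = z + w ∧ deg z ≤ (d : ℝ) - 1 := by
    intro KN
    induction KN with
    | zero =>
        intro y hy hle
        exfalso
        have hpos := riC_deg_pos hqP hy.1
        simp only [Nat.cast_zero] at hle
        linarith
    | succ KN ih =>
        intro y hy hle
        by_cases hsmall : deg y ≤ (d:ℝ) - 1
        · exact ⟨y, 0, hy, (Msemi P).zero_mem, by simp, hsmall⟩
        · push_neg at hsmall
          have hyd : (d:ℝ) ≤ deg y := by
            obtain ⟨K, hK⟩ := isLat_deg_int hy.2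
            rw [hK] at hsmall ⊢
            have h1 : (d:ℤ) - 1 < K := by exact_mod_cast hsmall
            have h2 : (d:ℤ) ≤ K := by omega
            exact_mod_cast h2
          obtain ⟨a, haP, halat, hari⟩ := claimD hd hV hVlat hP hdim hq hqlat hy.1 hy.2 hyd
          have hy' : y - lift a ∈ Mstar P := ⟨hari, isLat_sub hy.2 (isLat_lift halat)⟩
          have hdeg' : deg (y - lift a) ≤ (KN:ℝ) := by
            rw [deg_sub, deg_lift]
            push_cast at hle ⊢
            linarith
          obtain ⟨z, w, hz, hw, heq, hzd⟩ := ih (y - lift a) hy' hdeg'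
          refine ⟨z, w + lift a, hz, (Msemi P).add_mem hw
            (AddSubmonoid.subset_closure ⟨a, haP, halat, rfl⟩), ?_, hzd⟩
          calc y = (y - lift a) + lift a := by abel
          _ = z + w + lift a := by rw [heq]
          _ = z + (w + lift a) := by rw [add_assoc]
  intro y hy
  obtain ⟨K, hK⟩ := isLat_deg_int hy.2
  refine key K.toNat y hy ?_
  rw [hK]
  exact_mod_cast Int.self_le_toNat K
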